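/- Let A, B, C ≥ 0, D ∈ ℝ, ρ, γ ∈ (0,1], and f(t,y,z) = A - B·sgn(y)·|y| - C·sgn(y)·|y|^ρ·|z|^γ + D·y·|z|^γ. Then there exists L ≥ 0 (one may take L = max{B+|D|, 2C, C+|D|}) such that for all t₁,t₂ ≥ 0 and y₁,y₂,z₁,z₂ ∈ ℝ: |f(t₁,y₁,z₁) - f(t₂,y₂,z₂)| ≤ L·[(1+|z₁|+|z₂|)(1+|y₁|+|y₂|)|t₁-t₂| + (1+|z₁|+|z₂|)|y₁-y₂| + (1+|z₁|+|z₂|)|y₁-y₂|^ρ + (1+|y₁|+|y₂|)|z₁-z₂|^γ]. -/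
import Mathlib

noncomputable def sgn' (y : ℝ) : ℝ := if 0 ≤ y then 1 else -1

lemma myAddRpow {a b p : ℝ} (ha : 0 ≤ a) (hb : 0 ≤ b) (hp : 0 ≤ p) (hp1 : p ≤ 1) :
    (a + b) ^ p ≤ a ^ p + b ^ p := by
  have h := NNReal.rpow_add_le_add_rpow a.toNNReal b.toNNReal hp hp1
  have := NNReal.coe_le_coe.2 h
  simpa [NNReal.coe_rpow, Real.coe_toNNReal a ha, Real.coe_toNNReal b hb,
    Real.toNNReal_add ha hb] using this

lemma myHoelder {a b p : ℝ} (ha : 0 ≤ a) (hb : 0 ≤ b) (hp : 0 ≤ p) (hp1 : p ≤ 1) :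
    |a ^ p - b ^ p| ≤ |a - b| ^ p := by
  wlog hba : b ≤ a generalizing a b
  · rw [abs_sub_comm, abs_sub_comm a b]; exact this hb ha (le_of_not_ge hba)
  have h1 : b ^ p ≤ a ^ p := Real.rpow_le_rpow hb hba hp
  rw [abs_of_nonneg (by linarith), abs_of_nonneg (by linarith)]
  have := myAddRpow (a := a - b) (b := b) (by linarith) hb hp hp1
  rw [sub_add_cancel] at this
  linarith

lemma myRpowLe {x p : ℝ} (hp : 0 < p) (hp1 : p ≤ 1) : |x| ^ p ≤ 1 + |x| := by
  rcases le_or_gt (|x|) 1 with h | h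
  · have := Real.rpow_le_one (abs_nonneg x) h hp.le
    linarith [abs_nonneg x]
  · have := Real.rpow_le_rpow_of_exponent_le h.le hp1
    rw [Real.rpow_one] at this
    linarith

lemma myAbsHoelder {a b p : ℝ} (hp : 0 ≤ p) (hp1 : p ≤ 1) :
    abs (|a| ^ p - |b| ^ p) ≤ |a - b| ^ p := by
  calc abs (|a| ^ p - |b| ^ p) ≤ abs (|a| - |b|) ^ p :=
        myHoelder (abs_nonneg _) (abs_nonneg _) hp hp1
    _ ≤ |a - b| ^ p :=
        Real.rpow_le_rpow (abs_nonneg _) (abs_abs_sub_abs_le_abs_sub _ _) hp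

lemma mySgnMulAbs (y : ℝ) : sgn' y * |y| = y := by
  unfold sgn'
  split
  · rw [abs_of_nonneg ‹_›, one_mul]
  · rw [abs_of_neg (lt_of_not_ge ‹_›)]; ring

lemma myAbsSgn (y : ℝ) : |sgn' y| = 1 := by
  unfold sgn'; split <;> simp

lemma mySgnHoelder {p : ℝ} (hp : 0 < p) (hp1 : p ≤ 1) (y₁ y₂ : ℝ) :
    |sgn' y₁ * |y₁| ^ p - sgn' y₂ * |y₂| ^ p| ≤ 2 * |y₁ - y₂| ^ p := by
  have hR : 0 ≤ |y₁ - y₂| ^ p := Real.rpow_nonneg (abs_nonneg _) p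
  have hmix : ∀ a b : ℝ, 0 ≤ a → b < 0 →
      abs (|a| ^ p + |b| ^ p) ≤ 2 * |a - b| ^ p := by
    intro a b ha hb
    have hab : |a| ≤ |a - b| := by
      rw [abs_of_nonneg ha, abs_of_nonneg (by linarith)]; linarith
    have hbb : |b| ≤ |a - b| := by
      rw [abs_of_neg hb, abs_of_nonneg (by linarith)]; linarith
    have h1 : |a| ^ p ≤ |a - b| ^ p := Real.rpow_le_rpow (abs_nonneg _) hab hp.le
    have h2 : |b| ^ p ≤ |a - b| ^ p := Real.rpow_le_rpow (abs_nonneg _) hbb hp.le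
    have ha' : 0 ≤ |a| ^ p := Real.rpow_nonneg (abs_nonneg _) p
    have hb' : 0 ≤ |b| ^ p := Real.rpow_nonneg (abs_nonneg _) p
    rw [abs_of_nonneg (by linarith)]; linarith
  unfold sgn'
  rcases le_or_gt 0 y₁ with h1 | h1 <;> rcases le_or_gt 0 y₂ with h2 | h2
  · rw [if_pos h1, if_pos h2]
    simpa using (myAbsHoelder (a := y₁) (b := y₂) hp.le hp1).trans (by linarith)
  · rw [if_pos h1, if_neg (not_le.2 h2)]
    simpa [sub_neg_eq_add] using hmix y₁ y₂ h1 h2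
  · rw [if_neg (not_le.2 h1), if_pos h2]
    have hh := hmix y₂ y₁ h2 h1
    rw [abs_sub_comm y₂ y₁] at hh
    have e : (-1) * |y₁| ^ p - 1 * |y₂| ^ p = -(|y₂| ^ p + |y₁| ^ p) := by ring
    rw [e, abs_neg]; exact hh
  · rw [if_neg (not_le.2 h1), if_neg (not_le.2 h2)]
    have hh := myAbsHoelder (a := y₁) (b := y₂) hp.le hp1
    have e : (-1) * |y₁| ^ p - (-1) * |y₂| ^ p = -(|y₁| ^ p - |y₂| ^ p) := by ring
    rw [e, abs_neg]; exact hh.trans (by linarith)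

set_option maxHeartbeats 1000000 in
theorem metal_holder_condition (A B C D ρ γ : ℝ)
    (hA : 0 ≤ A) (hB : 0 ≤ B) (hC : 0 ≤ C)
    (hρ0 : 0 < ρ) (hρ1 : ρ ≤ 1) (hγ0 : 0 < γ) (hγ1 : γ ≤ 1)
    (f : ℝ → ℝ → ℝ → ℝ)
    (hf : ∀ t y z, f t y z =
      A - B * sgn' y * |y| - C * sgn' y * |y| ^ ρ * |z| ^ γ + D * y * |z| ^ γ) :
    ∃ L, 0 ≤ L ∧
      ∀ t₁ t₂ y₁ y₂ z₁ z₂ : ℝ, 0 ≤ t₁ → 0 ≤ t₂ →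
        |f t₁ y₁ z₁ - f t₂ y₂ z₂| ≤
          L * ((1 + |z₁| + |z₂|) * (1 + |y₁| + |y₂|) * |t₁ - t₂|
            + (1 + |z₁| + |z₂|) * |y₁ - y₂|
            + (1 + |z₁| + |z₂|) * |y₁ - y₂| ^ ρ
            + (1 + |y₁| + |y₂|) * |z₁ - z₂| ^ γ) := by
  refine ⟨B + 3 * C + 2 * |D|, by positivity, ?_⟩
  intro t₁ t₂ y₁ y₂ z₁ z₂ _ _
  set Sz := 1 + |z₁| + |z₂| with hSzdef
  set Sy := 1 + |y₁| + |y₂| with hSydef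
  set p₁ := sgn' y₁ * |y₁| ^ ρ with hp₁
  set p₂ := sgn' y₂ * |y₂| ^ ρ with hp₂
  set Z₁ := |z₁| ^ γ with hZ₁def
  set Z₂ := |z₂| ^ γ with hZ₂def
  have hSz : 1 ≤ Sz := by rw [hSzdef]; linarith [abs_nonneg z₁, abs_nonneg z₂]
  have hSy : 1 ≤ Sy := by rw [hSydef]; linarith [abs_nonneg y₁, abs_nonneg y₂]
  have hZ1nn : 0 ≤ Z₁ := Real.rpow_nonneg (abs_nonneg _) γ
  have hZ1le : Z₁ ≤ Sz := by
    have := myRpowLe (x := z₁) hγ0 hγ1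
    rw [hZ₁def, hSzdef]; linarith [abs_nonneg z₂]
  have hZd : |Z₁ - Z₂| ≤ |z₁ - z₂| ^ γ := myAbsHoelder hγ0.le hγ1
  have hp2 : |p₂| ≤ Sy := by
    have h1 : |p₂| = |y₂| ^ ρ := by
      rw [hp₂, abs_mul, myAbsSgn, one_mul,
        abs_of_nonneg (Real.rpow_nonneg (abs_nonneg y₂) ρ)]
    have := myRpowLe (x := y₂) hρ0 hρ1
    rw [h1, hSydef]; linarith [abs_nonneg y₁]
  have hpd : |p₁ - p₂| ≤ 2 * |y₁ - y₂| ^ ρ := mySgnHoelder hρ0 hρ1 y₁ y₂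
  have hy2 : |y₂| ≤ Sy := by rw [hSydef]; linarith [abs_nonneg y₁]
  have hdiff : f t₁ y₁ z₁ - f t₂ y₂ z₂ =
      (-B) * (y₁ - y₂) + (-C) * ((p₁ - p₂) * Z₁ + p₂ * (Z₁ - Z₂))
        + D * ((y₁ - y₂) * Z₁ + y₂ * (Z₁ - Z₂)) := by
    rw [hf, hf]
    have e1 : B * sgn' y₁ * |y₁| = B * y₁ := by rw [mul_assoc, mySgnMulAbs]
    have e2 : B * sgn' y₂ * |y₂| = B * y₂ := by rw [mul_assoc, mySgnMulAbs]
    rw [e1, e2, hp₁, hp₂, hZ₁def, hZ₂def]; ring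
  rw [hdiff]
  have hRy : 0 ≤ |y₁ - y₂| ^ ρ := Real.rpow_nonneg (abs_nonneg _) ρ
  have hRz : 0 ≤ |z₁ - z₂| ^ γ := Real.rpow_nonneg (abs_nonneg _) γ
  have hT1 : 0 ≤ (B + 3 * C + 2 * |D|) * (Sz * Sy * |t₁ - t₂|) := by positivity
  have tri := abs_add_three ((-B) * (y₁ - y₂))
    ((-C) * ((p₁ - p₂) * Z₁ + p₂ * (Z₁ - Z₂)))
    (D * ((y₁ - y₂) * Z₁ + y₂ * (Z₁ - Z₂)))
  have hSzy : 0 ≤ Sz * |y₁ - y₂| := by positivity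
  have hSzr : 0 ≤ Sz * |y₁ - y₂| ^ ρ := by positivity
  have hSyr : 0 ≤ Sy * |z₁ - z₂| ^ γ := by positivity
  have b1 : |(-B) * (y₁ - y₂)| ≤ B * (Sz * |y₁ - y₂|) := by
    rw [abs_mul, abs_neg, abs_of_nonneg hB]
    have : |y₁ - y₂| ≤ Sz * |y₁ - y₂| := le_mul_of_one_le_left (abs_nonneg _) hSz
    nlinarith [abs_nonneg (y₁ - y₂)]
  have b2 : |(-C) * ((p₁ - p₂) * Z₁ + p₂ * (Z₁ - Z₂))| ≤
      C * (2 * (Sz * |y₁ - y₂| ^ ρ) + Sy * |z₁ - z₂| ^ γ) := by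
    rw [abs_mul, abs_neg, abs_of_nonneg hC]
    have h := abs_add_le ((p₁ - p₂) * Z₁) (p₂ * (Z₁ - Z₂))
    rw [abs_mul, abs_mul] at h
    have h1 : |p₁ - p₂| * |Z₁| ≤ 2 * |y₁ - y₂| ^ ρ * Sz := by
      rw [abs_of_nonneg hZ1nn]
      exact mul_le_mul hpd hZ1le hZ1nn (by linarith)
    have h2 : |p₂| * |Z₁ - Z₂| ≤ Sy * (|z₁ - z₂| ^ γ) :=
      mul_le_mul hp2 hZd (abs_nonneg _) (by linarith)
    have := add_le_add h1 h2
    have hCle : |(p₁ - p₂) * Z₁ + p₂ * (Z₁ - Z₂)| ≤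
        2 * (Sz * |y₁ - y₂| ^ ρ) + Sy * |z₁ - z₂| ^ γ := by
      calc |(p₁ - p₂) * Z₁ + p₂ * (Z₁ - Z₂)| ≤ |p₁ - p₂| * |Z₁| + |p₂| * |Z₁ - Z₂| := h
        _ ≤ 2 * |y₁ - y₂| ^ ρ * Sz + Sy * (|z₁ - z₂| ^ γ) := this
        _ = 2 * (Sz * |y₁ - y₂| ^ ρ) + Sy * |z₁ - z₂| ^ γ := by ring
    exact mul_le_mul_of_nonneg_left hCle hC
  have b3 : |D * ((y₁ - y₂) * Z₁ + y₂ * (Z₁ - Z₂))| ≤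
      |D| * (Sz * |y₁ - y₂| + Sy * |z₁ - z₂| ^ γ) := by
    rw [abs_mul]
    refine mul_le_mul_of_nonneg_left ?_ (abs_nonneg D)
    have h := abs_add_le ((y₁ - y₂) * Z₁) (y₂ * (Z₁ - Z₂))
    rw [abs_mul, abs_mul] at h
    have h1 : |y₁ - y₂| * |Z₁| ≤ |y₁ - y₂| * Sz := by
      rw [abs_of_nonneg hZ1nn]
      exact mul_le_mul_of_nonneg_left hZ1le (abs_nonneg _)
    have h2 : |y₂| * |Z₁ - Z₂| ≤ Sy * (|z₁ - z₂| ^ γ) :=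
      mul_le_mul hy2 hZd (abs_nonneg _) (by linarith)
    calc |(y₁ - y₂) * Z₁ + y₂ * (Z₁ - Z₂)| ≤ |y₁ - y₂| * |Z₁| + |y₂| * |Z₁ - Z₂| := h
      _ ≤ |y₁ - y₂| * Sz + Sy * (|z₁ - z₂| ^ γ) := add_le_add h1 h2
      _ = Sz * |y₁ - y₂| + Sy * |z₁ - z₂| ^ γ := by ring
  have k1 : 0 ≤ (3 * C + |D|) * (Sz * |y₁ - y₂|) := by positivity
  have k2 : 0 ≤ (B + C + 2 * |D|) * (Sz * |y₁ - y₂| ^ ρ) := by positivity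
  have k3 : 0 ≤ (B + 2 * C + |D|) * (Sy * |z₁ - z₂| ^ γ) := by positivity
  nlinarith [tri, b1, b2, b3, hT1, k1, k2, k3]
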